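/- Let d be a positive integer, r ≥ 1 a real number, and O ⊆ ℝ^d a bounded measurable set equipped with Lebesgue measure. Let (y_n) be a sequence of a.e.-strongly measurable functions y_n : O → ℝ^d and y : O → ℝ^d a measurable function such that (i) there is a constant C with ∫_O |y_n|^{r+1} dx ≤ C for all n, (ii) ∫_O |y|^{r+1} dx < ∞, and (iii) y_n(x) → y(x) for a.e. x ∈ O as n → ∞. Then for every measurable z : O → ℝ^d with ∫_O |z|^{r+1} dx < ∞, one has ∫_O ⟨|y_n(x)|^{r−1}y_n(x), z(x)⟩ dx → ∫_O ⟨|y(x)|^{r−1}y(x), z(x)⟩ dx as n → ∞. -/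

import Mathlib

open MeasureTheory Filter
open scoped RealInnerProductSpace ENNReal Topology

/-- Hölder bound. -/
lemma holder_aux {α : Type*} [MeasurableSpace α] (ν : Measure α)
    {E : Type*} [NormedAddCommGroup E]
    {r : ℝ} (hr : 1 ≤ r)
    (w z : α → E) (hw : AEStronglyMeasurable w ν) (hz : AEStronglyMeasurable z ν) :
    ∫⁻ x, ENNReal.ofReal (‖w x‖ ^ r * ‖z x‖) ∂ν ≤
      (∫⁻ x, ENNReal.ofReal (‖w x‖ ^ (r + 1)) ∂ν) ^ (r / (r + 1)) *
      (∫⁻ x, ENNReal.ofReal (‖z x‖ ^ (r + 1)) ∂ν) ^ (1 / (r + 1)) := by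
  have hr0 : (0:ℝ) < r := lt_of_lt_of_le zero_lt_one hr
  have hr1 : (0:ℝ) < r + 1 := by linarith
  have hpq : ((r+1)/r).HolderConjugate (r+1) := by
    rw [Real.holderConjugate_iff]; constructor
    · rw [lt_div_iff₀ hr0]; linarith
    · field_simp
  have hF : AEMeasurable (fun x => ENNReal.ofReal ‖w x‖ ^ r) ν :=
    hw.norm.aemeasurable.ennreal_ofReal.pow aemeasurable_const
  have hG : AEMeasurable (fun x => ENNReal.ofReal ‖z x‖) ν :=
    hz.norm.aemeasurable.ennreal_ofReal
  have key := ENNReal.lintegral_mul_le_Lp_mul_Lq ν hpq hF hG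
  have e1 : ∀ x : α, ENNReal.ofReal (‖w x‖ ^ r * ‖z x‖) =
      (ENNReal.ofReal ‖w x‖ ^ r) * ENNReal.ofReal ‖z x‖ := by
    intro x
    rw [ENNReal.ofReal_mul (Real.rpow_nonneg (norm_nonneg _) _),
      ENNReal.ofReal_rpow_of_nonneg (norm_nonneg _) hr0.le]
  have e2 : ∀ x : α, (ENNReal.ofReal ‖w x‖ ^ r) ^ ((r+1)/r) =
      ENNReal.ofReal (‖w x‖ ^ (r + 1)) := by
    intro x
    rw [← ENNReal.rpow_mul, mul_div_cancel₀ _ hr0.ne',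
      ENNReal.ofReal_rpow_of_nonneg (norm_nonneg _) hr1.le]
  have e3 : ∀ x : α, (ENNReal.ofReal ‖z x‖) ^ (r+1) =
      ENNReal.ofReal (‖z x‖ ^ (r + 1)) :=
    fun x => ENNReal.ofReal_rpow_of_nonneg (norm_nonneg _) hr1.le
  have e4 : 1 / ((r+1)/r) = r / (r+1) := by field_simp
  calc ∫⁻ x, ENNReal.ofReal (‖w x‖ ^ r * ‖z x‖) ∂ν
      = ∫⁻ x, ((fun x => ENNReal.ofReal ‖w x‖ ^ r) * fun x => ENNReal.ofReal ‖z x‖) x ∂ν := by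
        simp only [Pi.mul_apply]; exact lintegral_congr e1
    _ ≤ (∫⁻ x, (ENNReal.ofReal ‖w x‖ ^ r) ^ ((r+1)/r) ∂ν) ^ (1/((r+1)/r)) *
        (∫⁻ x, (ENNReal.ofReal ‖z x‖) ^ (r+1) ∂ν) ^ (1/(r+1)) := key
    _ = (∫⁻ x, ENNReal.ofReal (‖w x‖ ^ (r + 1)) ∂ν) ^ (r/(r+1)) *
        (∫⁻ x, ENNReal.ofReal (‖z x‖ ^ (r + 1)) ∂ν) ^ (1/(r+1)) := by
        rw [lintegral_congr e2, lintegral_congr e3, e4]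

/-- Pointwise bound on the integrand. -/
lemma inner_damping_bound {E : Type*} [NormedAddCommGroup E] [InnerProductSpace ℝ E]
    {r : ℝ} (hr : 1 ≤ r) (v u : E) :
    ‖⟪(‖v‖ ^ (r - 1)) • v, u⟫‖ ≤ ‖v‖ ^ r * ‖u‖ := by
  have h1 : ‖(‖v‖ ^ (r - 1)) • v‖ = ‖v‖ ^ r := by
    rw [norm_smul, Real.norm_eq_abs, abs_of_nonneg (Real.rpow_nonneg (norm_nonneg _) _)]
    rcases eq_or_ne (‖v‖) 0 with h | h
    · rw [h, Real.zero_rpow (by linarith : r ≠ 0)]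
      simp
    · have hp : 0 < ‖v‖ := (norm_nonneg v).lt_of_ne (Ne.symm h)
      calc ‖v‖ ^ (r-1) * ‖v‖ = ‖v‖ ^ (r-1) * ‖v‖ ^ (1:ℝ) := by rw [Real.rpow_one]
        _ = ‖v‖ ^ (r-1+1) := (Real.rpow_add hp _ _).symm
        _ = ‖v‖ ^ r := by ring_nf
  calc ‖⟪(‖v‖ ^ (r - 1)) • v, u⟫‖ ≤ ‖(‖v‖ ^ (r - 1)) • v‖ * ‖u‖ := norm_inner_le_norm _ _
    _ = ‖v‖ ^ r * ‖u‖ := by rw [h1]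

/-- weak convergence of the damping Nemytskii operator: if `O ⊆ ℝ^d` is
bounded and measurable, `(y_n)` are a.e.-strongly measurable with
`∫_O |y_n|^{r+1} ≤ C`, `y` is measurable with `∫_O |y|^{r+1} < ∞`, and `y_n → y` a.e.
on `O`, then for every measurable `z` with `∫_O |z|^{r+1} < ∞`,
`∫_O ⟨|y_n|^{r-1}y_n, z⟩ → ∫_O ⟨|y|^{r-1}y, z⟩`. -/
theorem damping_weak_convergence (d : ℕ) (hd : 0 < d) (r : ℝ) (hr : 1 ≤ r)
    (O : Set (EuclideanSpace ℝ (Fin d)))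
    (hObdd : Bornology.IsBounded O) (hOmeas : MeasurableSet O)
    (y : ℕ → EuclideanSpace ℝ (Fin d) → EuclideanSpace ℝ (Fin d))
    (y₀ : EuclideanSpace ℝ (Fin d) → EuclideanSpace ℝ (Fin d))
    (hy : ∀ n, AEStronglyMeasurable (y n) (volume.restrict O))
    (hy₀ : Measurable y₀)
    (C : ℝ)
    (hbound : ∀ n, ∫⁻ x in O, ENNReal.ofReal (‖y n x‖ ^ (r + 1)) ≤ ENNReal.ofReal C)
    (hy₀int : ∫⁻ x in O, ENNReal.ofReal (‖y₀ x‖ ^ (r + 1)) < ⊤)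
    (hae : ∀ᵐ x ∂(volume.restrict O), Tendsto (fun n => y n x) atTop (𝓝 (y₀ x))) :
    ∀ z : EuclideanSpace ℝ (Fin d) → EuclideanSpace ℝ (Fin d), Measurable z →
      (∫⁻ x in O, ENNReal.ofReal (‖z x‖ ^ (r + 1)) < ⊤) →
      Tendsto (fun n => ∫ x in O, ⟪(‖y n x‖ ^ (r - 1)) • y n x, z x⟫) atTop
        (𝓝 (∫ x in O, ⟪(‖y₀ x‖ ^ (r - 1)) • y₀ x, z x⟫)) := by
  intro z hz hzint
  have hr1 : (0:ℝ) < r + 1 := by linarith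
  set μ := volume.restrict O with hμdef
  haveI : IsFiniteMeasure μ :=
    ⟨by rw [Measure.restrict_apply_univ]; exact hObdd.measure_lt_top⟩
  set φ : EuclideanSpace ℝ (Fin d) → EuclideanSpace ℝ (Fin d) :=
    fun v => (‖v‖ ^ (r - 1)) • v with hφdef
  have hφcont : Continuous φ :=
    (continuous_norm.rpow_const fun x => Or.inr (by linarith)).smul continuous_id
  set g : ℕ → EuclideanSpace ℝ (Fin d) → ℝ := fun n x => ⟪φ (y n x), z x⟫ with hgdef
  set g₀ : EuclideanSpace ℝ (Fin d) → ℝ := fun x => ⟪φ (y₀ x), z x⟫ with hg₀def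
  have hzm : AEStronglyMeasurable z μ := hz.aestronglyMeasurable
  have hgm : ∀ n, AEStronglyMeasurable (g n) μ := fun n =>
    (hφcont.comp_aestronglyMeasurable (hy n)).inner hzm
  -- integrability
  have hint : ∀ (w : EuclideanSpace ℝ (Fin d) → EuclideanSpace ℝ (Fin d)),
      AEStronglyMeasurable w μ →
      (∫⁻ x, ENNReal.ofReal (‖w x‖ ^ (r + 1)) ∂μ ≠ ⊤) →
      Integrable (fun x => ⟪φ (w x), z x⟫) μ := by
    intro w hw hwint
    refine ⟨(hφcont.comp_aestronglyMeasurable hw).inner hzm, ?_⟩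
    rw [hasFiniteIntegral_iff_norm]
    calc ∫⁻ x, ENNReal.ofReal ‖⟪φ (w x), z x⟫‖ ∂μ
        ≤ ∫⁻ x, ENNReal.ofReal (‖w x‖ ^ r * ‖z x‖) ∂μ :=
          lintegral_mono fun x => ENNReal.ofReal_le_ofReal (inner_damping_bound hr _ _)
      _ ≤ (∫⁻ x, ENNReal.ofReal (‖w x‖ ^ (r + 1)) ∂μ) ^ (r / (r + 1)) *
          (∫⁻ x, ENNReal.ofReal (‖z x‖ ^ (r + 1)) ∂μ) ^ (1 / (r + 1)) :=
          holder_aux μ hr w z hw hzm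
      _ < ⊤ := ENNReal.mul_lt_top
          (ENNReal.rpow_lt_top_of_nonneg (by positivity) hwint)
          (ENNReal.rpow_lt_top_of_nonneg (by positivity) hzint.ne)
  have hgnint : ∀ n, Integrable (g n) μ := fun n =>
    hint (y n) (hy n) (lt_of_le_of_lt (hbound n) ENNReal.ofReal_lt_top).ne
  have hg₀int : Integrable g₀ μ := hint y₀ hy₀.aestronglyMeasurable hy₀int.ne
  -- uniform integrability
  have hui : UnifIntegrable g 1 μ := by
    intro ε hε
    set K : ℝ≥0∞ := (ENNReal.ofReal C) ^ (r / (r + 1)) + 1 with hK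
    have hK0 : K ≠ 0 := by simp [hK]
    have hKtop : K ≠ ⊤ := by
      rw [hK]
      exact (ENNReal.add_lt_top.2 ⟨ENNReal.rpow_lt_top_of_nonneg (by positivity)
        ENNReal.ofReal_ne_top, ENNReal.one_lt_top⟩).ne
    have hεK : ENNReal.ofReal ε / K ≠ 0 :=
      (ENNReal.div_pos_iff.2 ⟨(ENNReal.ofReal_pos.2 hε).ne', hKtop⟩).ne'
    have hεKtop : ENNReal.ofReal ε / K ≠ ⊤ :=
      (ENNReal.div_lt_top ENNReal.ofReal_ne_top hK0).ne
    set η : ℝ≥0∞ := (ENNReal.ofReal ε / K) ^ (r + 1) with hη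
    have hη0 : η ≠ 0 :=
      (ENNReal.rpow_pos (pos_iff_ne_zero.2 hεK) hεKtop).ne'
    obtain ⟨δ, hδ0, hδ⟩ := exists_pos_setLIntegral_lt_of_measure_lt
      (μ := μ) (f := fun x => ENNReal.ofReal (‖z x‖ ^ (r + 1))) hzint.ne hη0
    obtain ⟨d', _, hd'pos, hd'lt⟩ := ENNReal.lt_iff_exists_real_btwn.1 hδ0
    refine ⟨d', ENNReal.ofReal_pos.1 hd'pos, fun n s hs hμs => ?_⟩
    rw [eLpNorm_one_eq_lintegral_enorm]; simp only [enorm_eq_nnnorm]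
    have hind : ∫⁻ x, (‖s.indicator (g n) x‖₊ : ℝ≥0∞) ∂μ =
        ∫⁻ x in s, (‖g n x‖₊ : ℝ≥0∞) ∂μ := by
      rw [← lintegral_indicator hs]
      exact lintegral_congr fun x => by by_cases hx : x ∈ s <;> simp [hx]
    rw [hind]
    calc ∫⁻ x, (‖g n x‖₊ : ℝ≥0∞) ∂(μ.restrict s)
        = ∫⁻ x, ENNReal.ofReal ‖g n x‖ ∂(μ.restrict s) := by
          simp_rw [ofReal_norm_eq_enorm, enorm_eq_nnnorm]
      _ ≤ ∫⁻ x, ENNReal.ofReal (‖y n x‖ ^ r * ‖z x‖) ∂(μ.restrict s) :=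
          lintegral_mono fun x => ENNReal.ofReal_le_ofReal (inner_damping_bound hr _ _)
      _ ≤ (∫⁻ x, ENNReal.ofReal (‖y n x‖ ^ (r + 1)) ∂(μ.restrict s)) ^ (r / (r + 1)) *
          (∫⁻ x, ENNReal.ofReal (‖z x‖ ^ (r + 1)) ∂(μ.restrict s)) ^ (1 / (r + 1)) :=
          holder_aux (μ.restrict s) hr _ _ ((hy n).restrict) (hzm.restrict)
      _ ≤ (ENNReal.ofReal C) ^ (r / (r + 1)) * η ^ (1 / (r + 1)) := by
          refine mul_le_mul' (ENNReal.rpow_le_rpow ?_ (by positivity))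
            (ENNReal.rpow_le_rpow ?_ (by positivity))
          · exact le_trans (lintegral_mono' Measure.restrict_le_self le_rfl) (hbound n)
          · exact (hδ s (lt_of_le_of_lt hμs hd'lt)).le
      _ ≤ K * η ^ (1 / (r + 1)) := mul_le_mul' le_self_add le_rfl
      _ = K * (ENNReal.ofReal ε / K) := by
          rw [hη, ← ENNReal.rpow_mul, mul_one_div_cancel hr1.ne', ENNReal.rpow_one]
      _ = ENNReal.ofReal ε := ENNReal.mul_div_cancel hK0 hKtop
  -- a.e. convergence of the integrands
  have haeg : ∀ᵐ x ∂μ, Tendsto (fun n => g n x) atTop (𝓝 (g₀ x)) := by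
    filter_upwards [hae] with x hx
    exact ((hφcont.tendsto _).comp hx).inner tendsto_const_nhds
  -- Vitali
  have hL1 := tendsto_Lp_finite_of_tendsto_ae (μ := μ) le_rfl ENNReal.one_ne_top hgm
    (memLp_one_iff_integrable.2 hg₀int) hui haeg
  simp_rw [eLpNorm_one_eq_lintegral_enorm, Pi.sub_apply] at hL1
  exact tendsto_integral_of_L1 g₀ hg₀int.1 (Eventually.of_forall hgnint) hL1
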